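/- Let n ≥ 1 be an integer and z ≠ 0 a real number with 1 − μ̄_v θ̄ z ≠ 0, 1 − μ̄_b z ≠ 0, and D(z) := μ_b(1 − μ̄_v θ̄ z) − μ_v θ̄(1 − μ̄_b z) ≠ 0. Write A(z) = μ_v θ̄ z/(1 − μ̄_v θ̄ z), B(z) = μ_b z/(1 − μ̄_b z), and T(z) = θ/(1 − μ̄_v θ̄ z). Then μ_v·[A(z)ⁿ + Σ_{j=0}^{n−1} T(z)·A(z)^j·B(z)^{n−j}] + μ̄_v·[A(z)^{n+1} + Σ_{j=0}^{n} T(z)·A(z)^j·B(z)^{n+1−j}] + A(z) + T(z)·B(z) = (μ_v/(1 − μ̄_v θ̄ z))·A(z)ⁿ·(1 − θμ_b/D(z)) + (θμ_b/D(z))·B(z)ⁿ·(μ_v + μ̄_v μ_b z/(1 − μ̄_b z)) + A(z) + T(z)·B(z). -/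

import Mathlib

lemma geom_aux (a b : ℝ) (n : ℕ) :
    (b - a) * ∑ j ∈ Finset.range n, a ^ j * b ^ (n - j) = b * (b ^ n - a ^ n) := by
  induction n with
  | zero => simp
  | succ n ih =>
    have hstep : ∑ j ∈ Finset.range (n+1), a ^ j * b ^ (n + 1 - j)
        = b * (∑ j ∈ Finset.range n, a ^ j * b ^ (n - j)) + a ^ n * b := by
      rw [Finset.sum_range_succ, Finset.mul_sum]
      congr 1
      · apply Finset.sum_congr rfl
        intro j hj
        have hj' : j < n := Finset.mem_range.mp hj
        have : n + 1 - j = (n - j) + 1 := by omega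
        rw [this, pow_succ]
        ring
      · simp
    rw [hstep]
    calc (b - a) * (b * (∑ j ∈ Finset.range n, a ^ j * b ^ (n - j)) + a ^ n * b)
        = b * ((b - a) * ∑ j ∈ Finset.range n, a ^ j * b ^ (n - j)) + (b - a) * (a ^ n * b) := by
          ring
      _ = b * (b * (b ^ n - a ^ n)) + (b - a) * (a ^ n * b) := by rw [ih]
      _ = b * (b ^ (n+1) - a ^ (n+1)) := by ring

theorem stmt_12
    (μb μv θ : ℝ)
    (hμb : μb ∈ Set.Ioo (0:ℝ) 1) (hμv : μv ∈ Set.Ioo (0:ℝ) 1) (hθ : θ ∈ Set.Ioo (0:ℝ) 1)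
    (n : ℕ) (hn : 1 ≤ n) (z : ℝ) (hz : z ≠ 0)
    (h1 : 1 - (1 - μv) * (1 - θ) * z ≠ 0) (h2 : 1 - (1 - μb) * z ≠ 0)
    (hD : μb * (1 - (1 - μv) * (1 - θ) * z) - μv * (1 - θ) * (1 - (1 - μb) * z) ≠ 0) :
    μv * ((μv * (1 - θ) * z / (1 - (1 - μv) * (1 - θ) * z)) ^ n +
        ∑ j ∈ Finset.range n, θ / (1 - (1 - μv) * (1 - θ) * z) *
          (μv * (1 - θ) * z / (1 - (1 - μv) * (1 - θ) * z)) ^ j *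
          (μb * z / (1 - (1 - μb) * z)) ^ (n - j)) +
      (1 - μv) * ((μv * (1 - θ) * z / (1 - (1 - μv) * (1 - θ) * z)) ^ (n + 1) +
        ∑ j ∈ Finset.range (n + 1), θ / (1 - (1 - μv) * (1 - θ) * z) *
          (μv * (1 - θ) * z / (1 - (1 - μv) * (1 - θ) * z)) ^ j *
          (μb * z / (1 - (1 - μb) * z)) ^ (n + 1 - j)) +
      μv * (1 - θ) * z / (1 - (1 - μv) * (1 - θ) * z) +
      θ / (1 - (1 - μv) * (1 - θ) * z) * (μb * z / (1 - (1 - μb) * z))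
    = μv / (1 - (1 - μv) * (1 - θ) * z) *
        (μv * (1 - θ) * z / (1 - (1 - μv) * (1 - θ) * z)) ^ n *
        (1 - θ * μb / (μb * (1 - (1 - μv) * (1 - θ) * z) - μv * (1 - θ) * (1 - (1 - μb) * z))) +
      θ * μb / (μb * (1 - (1 - μv) * (1 - θ) * z) - μv * (1 - θ) * (1 - (1 - μb) * z)) *
        (μb * z / (1 - (1 - μb) * z)) ^ n *
        (μv + (1 - μv) * μb * z / (1 - (1 - μb) * z)) +
      μv * (1 - θ) * z / (1 - (1 - μv) * (1 - θ) * z) +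
      θ / (1 - (1 - μv) * (1 - θ) * z) * (μb * z / (1 - (1 - μb) * z)) := by
  set A := μv * (1 - θ) * z / (1 - (1 - μv) * (1 - θ) * z) with hA
  set B := μb * z / (1 - (1 - μb) * z) with hB
  set T := θ / (1 - (1 - μv) * (1 - θ) * z) with hT
  set c := θ * μb / (μb * (1 - (1 - μv) * (1 - θ) * z) - μv * (1 - θ) * (1 - (1 - μb) * z))
    with hc
  -- B - A is nonzero
  have hkey : B - A =
      z * (μb * (1 - (1 - μv) * (1 - θ) * z) - μv * (1 - θ) * (1 - (1 - μb) * z)) /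
        ((1 - (1 - μb) * z) * (1 - (1 - μv) * (1 - θ) * z)) := by
    rw [hA, hB]
    rw [div_sub_div _ _ h2 h1, div_eq_div_iff (mul_ne_zero h2 h1) (mul_ne_zero h2 h1)]
    ring
  have hba : B - A ≠ 0 := by
    rw [hkey]
    exact div_ne_zero (mul_ne_zero hz hD) (mul_ne_zero h2 h1)
  -- key scalar identity: T * B = c * (B - A)
  have hTB : T * B = c * (B - A) := by
    rw [hkey, hT, hB, hc]
    rw [div_mul_div_comm, div_mul_div_comm,
      div_eq_div_iff (mul_ne_zero h1 h2) (mul_ne_zero hD (mul_ne_zero h2 h1))]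
    ring
  -- the sums collapse
  have hS : ∀ m : ℕ, ∑ j ∈ Finset.range m, T * A ^ j * B ^ (m - j)
      = c * (B ^ m - A ^ m) := by
    intro m
    have hsum : ∑ j ∈ Finset.range m, T * A ^ j * B ^ (m - j)
        = T * ∑ j ∈ Finset.range m, A ^ j * B ^ (m - j) := by
      rw [Finset.mul_sum]
      exact Finset.sum_congr rfl fun j _ => by ring
    apply mul_right_cancel₀ hba
    rw [hsum]
    calc T * (∑ j ∈ Finset.range m, A ^ j * B ^ (m - j)) * (B - A)
        = T * ((B - A) * ∑ j ∈ Finset.range m, A ^ j * B ^ (m - j)) := by ring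
      _ = T * (B * (B ^ m - A ^ m)) := by rw [geom_aux A B m]
      _ = (T * B) * (B ^ m - A ^ m) := by ring
      _ = (c * (B - A)) * (B ^ m - A ^ m) := by rw [hTB]
      _ = c * (B ^ m - A ^ m) * (B - A) := by ring
  rw [hS n, hS (n + 1)]
  -- remaining scalar identities
  have hM : μv + (1 - μv) * A = μv / (1 - (1 - μv) * (1 - θ) * z) := by
    rw [hA]
    rw [mul_div_assoc', add_div' _ _ _ h1, div_left_inj' h1]
    ring
  have hg : (1 - μv) * B = (1 - μv) * μb * z / (1 - (1 - μb) * z) := by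
    rw [hB]
    ring
  linear_combination (A ^ n * (1 - c)) * hM + (c * B ^ n) * hg
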